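/- arXiv:1207.7298 — 5 statements merged into one kernel-verified Lean document; each statement's English description precedes it below -/
import Mathlib

section
/- For fixed 0 < γ < 1, the function β ↦ β / Λ(β) is strictly monotone increasing on (0, γ), where Λ(β) = β log(β/γ) + (1−β) log((1−β)/(1−γ)). Consequently, for every c > 0 the equation c = β/Λ(β) has a unique solution β_c ∈ (0, γ). -/
open Real Filter Set Topology

private noncomputable def Lam (γ β : ℝ) : ℝ :=
  β * Real.log (β / γ) + (1 - β) * Real.log ((1 - β) / (1 - γ))

private lemma lam_hasDerivAt {γ : ℝ} (hγ0 : 0 < γ) (hγ1 : γ < 1) {β : ℝ}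
    (hβ0 : 0 < β) (hβ1 : β < 1) :
    HasDerivAt (Lam γ) (Real.log (β / γ) - Real.log ((1 - β) / (1 - γ))) β := by
  have h1γ : (0:ℝ) < 1 - γ := by linarith
  have h1β : (0:ℝ) < 1 - β := by linarith
  have hγ0' : γ ≠ 0 := hγ0.ne'
  have hβ0' : β ≠ 0 := hβ0.ne'
  have h1γ' : (1:ℝ) - γ ≠ 0 := h1γ.ne'
  have h1β' : (1:ℝ) - β ≠ 0 := h1β.ne'
  have hd1 : HasDerivAt (fun x : ℝ => x / γ) (1 / γ) β := by
    simpa using (hasDerivAt_id β).div_const γ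
  have hl1 : HasDerivAt (fun x : ℝ => Real.log (x / γ)) ((β / γ)⁻¹ * (1 / γ)) β :=
    (Real.hasDerivAt_log (by positivity)).comp β hd1
  have hp1 : HasDerivAt (fun x : ℝ => x * Real.log (x / γ))
      (1 * Real.log (β / γ) + β * ((β / γ)⁻¹ * (1 / γ))) β :=
    (hasDerivAt_id β).mul hl1
  have hm2 : HasDerivAt (fun x : ℝ => 1 - x) (-1) β := by
    exact (hasDerivAt_id' β).const_sub 1
  have hd2 : HasDerivAt (fun x : ℝ => (1 - x) / (1 - γ)) (-1 / (1 - γ)) β :=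
    hm2.div_const (1 - γ)
  have hl2 : HasDerivAt (fun x : ℝ => Real.log ((1 - x) / (1 - γ)))
      (((1 - β) / (1 - γ))⁻¹ * (-1 / (1 - γ))) β :=
    (Real.hasDerivAt_log (by positivity)).comp β hd2
  have hp2 : HasDerivAt (fun x : ℝ => (1 - x) * Real.log ((1 - x) / (1 - γ)))
      ((-1) * Real.log ((1 - β) / (1 - γ)) +
        (1 - β) * (((1 - β) / (1 - γ))⁻¹ * (-1 / (1 - γ)))) β :=
    hm2.mul hl2
  have h : HasDerivAt (Lam γ) _ β := hp1.add hp2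
  convert h using 1
  field_simp
  ring

private lemma lam_pos {γ : ℝ} (hγ0 : 0 < γ) (hγ1 : γ < 1) {β : ℝ}
    (hβ0 : 0 < β) (hβγ : β < γ) : 0 < Lam γ β := by
  have h1γ : (0:ℝ) < 1 - γ := by linarith
  have h1β : (0:ℝ) < 1 - β := by linarith
  have h1 : Real.log (γ / β) < γ / β - 1 := by
    apply Real.log_lt_sub_one_of_pos (by positivity)
    intro h
    rw [div_eq_one_iff_eq hβ0.ne'] at h
    linarith
  have h2 : Real.log ((1 - γ) / (1 - β)) ≤ (1 - γ) / (1 - β) - 1 :=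
    Real.log_le_sub_one_of_pos (by positivity)
  have e1 : Real.log (β / γ) = - Real.log (γ / β) := by
    rw [← Real.log_inv]
    congr 1
    rw [inv_div]
  have e2 : Real.log ((1 - β) / (1 - γ)) = - Real.log ((1 - γ) / (1 - β)) := by
    rw [← Real.log_inv]
    congr 1
    rw [inv_div]
  have hb1 : β * Real.log (γ / β) < γ - β := by
    calc β * Real.log (γ / β) < β * (γ / β - 1) := by
          exact mul_lt_mul_of_pos_left h1 hβ0
      _ = γ - β := by field_simp
  have hb2 : (1 - β) * Real.log ((1 - γ) / (1 - β)) ≤ β - γ := by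
    calc (1 - β) * Real.log ((1 - γ) / (1 - β)) ≤ (1 - β) * ((1 - γ) / (1 - β) - 1) := by
          exact mul_le_mul_of_nonneg_left h2 h1β.le
      _ = β - γ := by field_simp; ring
  unfold Lam
  rw [e1, e2]
  nlinarith

private lemma lam_continuousOn {γ : ℝ} (hγ0 : 0 < γ) (hγ1 : γ < 1) :
    ContinuousOn (Lam γ) (Set.Ioo 0 γ) := by
  intro x hx
  exact ((lam_hasDerivAt hγ0 hγ1 hx.1 (hx.2.trans hγ1)).continuousAt).continuousWithinAt

private lemma H_strictAnti {γ : ℝ} (hγ0 : 0 < γ) (hγ1 : γ < 1) :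
    StrictAntiOn (fun β => Lam γ β / β) (Set.Ioo 0 γ) := by
  apply strictAntiOn_of_deriv_neg (convex_Ioo 0 γ)
  · exact (lam_continuousOn hγ0 hγ1).div continuousOn_id (fun x hx => hx.1.ne')
  · intro x hx
    rw [interior_Ioo] at hx
    obtain ⟨hx0, hxγ⟩ := hx
    have hx : x ∈ Set.Ioo 0 γ := ⟨hx0, hxγ⟩
    have hx1 : x < 1 := hxγ.trans hγ1
    have hL : HasDerivAt (fun β => Lam γ β / β)
        (((Real.log (x / γ) - Real.log ((1 - x) / (1 - γ))) * x - Lam γ x * 1) / x ^ 2) x :=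
      (lam_hasDerivAt hγ0 hγ1 hx.1 hx1).div (hasDerivAt_id x) hx.1.ne'
    rw [hL.deriv]
    have hnum : (Real.log (x / γ) - Real.log ((1 - x) / (1 - γ))) * x - Lam γ x * 1
        = - Real.log ((1 - x) / (1 - γ)) := by
      unfold Lam; ring
    rw [hnum]
    have hlog : 0 < Real.log ((1 - x) / (1 - γ)) := by
      apply Real.log_pos
      rw [lt_div_iff₀ (by linarith)]
      linarith
    have hx2 : (0:ℝ) < x ^ 2 := pow_pos hx0 2
    exact div_neg_of_neg_of_pos (by linarith) hx2

private lemma F_strictMono {γ : ℝ} (hγ0 : 0 < γ) (hγ1 : γ < 1) :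
    StrictMonoOn (fun β => β / Lam γ β) (Set.Ioo 0 γ) := by
  intro a ha b hb hab
  have h1 : Lam γ b / b < Lam γ a / a := H_strictAnti hγ0 hγ1 ha hb hab
  have hpb : 0 < Lam γ b / b := div_pos (lam_pos hγ0 hγ1 hb.1 hb.2) hb.1
  have h2 := one_div_lt_one_div_of_lt hpb h1
  simpa [one_div, inv_div] using h2

private lemma exists_small {γ : ℝ} (hγ0 : 0 < γ) (hγ1 : γ < 1) {c : ℝ} (hc : 0 < c) :
    ∃ a ∈ Set.Ioo 0 γ, a / Lam γ a < c := by
  have h1γ : (0:ℝ) < 1 - γ := by linarith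
  -- limit of Lam at 0+
  have ht1 : Tendsto (fun β : ℝ => β * Real.log β) (𝓝[>] (0:ℝ)) (𝓝 0) := by
    have := Real.continuous_mul_log.tendsto 0
    simp only [Real.log_zero, mul_zero, zero_mul] at this
    exact this.mono_left nhdsWithin_le_nhds
  have ht1' : Tendsto (fun β : ℝ => β * Real.log γ) (𝓝[>] (0:ℝ)) (𝓝 0) := by
    have : Tendsto (fun β : ℝ => β * Real.log γ) (𝓝 (0:ℝ)) (𝓝 (0 * Real.log γ)) :=
      (continuous_id.mul continuous_const).tendsto 0
    simpa using this.mono_left nhdsWithin_le_nhds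
  have hterm1 : Tendsto (fun β : ℝ => β * Real.log (β / γ)) (𝓝[>] (0:ℝ)) (𝓝 0) := by
    apply Tendsto.congr' _ (by simpa using ht1.sub ht1')
    filter_upwards [self_mem_nhdsWithin] with β (hβ : 0 < β)
    rw [Real.log_div hβ.ne' hγ0.ne', mul_sub]
  have hterm2 : Tendsto (fun β : ℝ => (1 - β) * Real.log ((1 - β) / (1 - γ)))
      (𝓝[>] (0:ℝ)) (𝓝 (1 * Real.log (1 / (1 - γ)))) := by
    have hcont : ContinuousAt (fun β : ℝ => (1 - β) * Real.log ((1 - β) / (1 - γ))) 0 := by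
      apply ContinuousAt.mul
      · exact (continuous_const.sub continuous_id).continuousAt
      · apply ContinuousAt.log
        · exact ((continuous_const.sub continuous_id).div_const _).continuousAt
        · simp
          positivity
    simpa using hcont.continuousWithinAt.tendsto
  have hL : Tendsto (Lam γ) (𝓝[>] (0:ℝ)) (𝓝 (Real.log (1 / (1 - γ)))) := by
    have := hterm1.add hterm2
    simpa using (show Tendsto (Lam γ) _ _ from this)
  have hLne : Real.log (1 / (1 - γ)) ≠ 0 := by
    apply ne_of_gt
    apply Real.log_pos
    rw [lt_div_iff₀ h1γ]
    linarith
  have hF : Tendsto (fun β : ℝ => β / Lam γ β) (𝓝[>] (0:ℝ)) (𝓝 0) := by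
    have hnum : Tendsto (fun β : ℝ => β) (𝓝[>] (0:ℝ)) (𝓝 0) :=
      tendsto_id.mono_left nhdsWithin_le_nhds
    simpa using (show Tendsto (fun β : ℝ => β / Lam γ β) _ _ from hnum.div hL hLne)
  have hev : ∀ᶠ β in 𝓝[>] (0:ℝ), β / Lam γ β < c :=
    hF.eventually_lt_const hc
  have hmem : Set.Ioo (0:ℝ) γ ∈ 𝓝[>] (0:ℝ) := Ioo_mem_nhdsGT_of_mem ⟨le_refl 0, hγ0⟩
  rcases (hev.and (eventually_of_mem hmem (fun x hx => hx))).exists with ⟨a, h1, h2⟩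
  exact ⟨a, h2, h1⟩

private lemma exists_big {γ : ℝ} (hγ0 : 0 < γ) (hγ1 : γ < 1) (c : ℝ) :
    ∃ b ∈ Set.Ioo 0 γ, c < b / Lam γ b := by
  have hmem : Set.Ioo (0:ℝ) γ ∈ 𝓝[<] γ := Ioo_mem_nhdsLT_of_mem ⟨hγ0, le_refl γ⟩
  have hL0 : Lam γ γ = 0 := by
    simp [Lam, div_self hγ0.ne', div_self (by linarith : (1:ℝ) - γ ≠ 0)]
  have hLcont : Tendsto (Lam γ) (𝓝 γ) (𝓝 0) := by
    have := (lam_hasDerivAt hγ0 hγ1 hγ0 hγ1).continuousAt.tendsto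
    rwa [hL0] at this
  have hLpos : ∀ᶠ β in 𝓝[<] γ, Lam γ β ∈ Set.Ioi (0:ℝ) := by
    filter_upwards [hmem] with β hβ
    exact lam_pos hγ0 hγ1 hβ.1 hβ.2
  have hLγ : Tendsto (Lam γ) (𝓝[<] γ) (𝓝[>] (0:ℝ)) :=
    tendsto_nhdsWithin_iff.2 ⟨hLcont.mono_left nhdsWithin_le_nhds, hLpos⟩
  have hinv : Tendsto (fun β => (Lam γ β)⁻¹) (𝓝[<] γ) atTop :=
    tendsto_inv_nhdsGT_zero.comp hLγ
  have hnum : Tendsto (fun β : ℝ => β) (𝓝[<] γ) (𝓝 γ) :=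
    tendsto_id.mono_left nhdsWithin_le_nhds
  have hdiv : Tendsto (fun β : ℝ => β / Lam γ β) (𝓝[<] γ) atTop := by
    simp only [div_eq_mul_inv]
    exact Filter.Tendsto.pos_mul_atTop hγ0 hnum hinv
  have hev : ∀ᶠ β in 𝓝[<] γ, c < β / Lam γ β := hdiv.eventually_gt_atTop c
  rcases (hev.and (eventually_of_mem hmem (fun x hx => hx))).exists with ⟨b, h1, h2⟩
  exact ⟨b, h2, h1⟩

theorem stmt_8 (γ : ℝ) (hγ0 : 0 < γ) (hγ1 : γ < 1) :
    StrictMonoOn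
      (fun β : ℝ => β / (β * Real.log (β / γ) + (1 - β) * Real.log ((1 - β) / (1 - γ))))
      (Set.Ioo 0 γ) ∧
    ∀ c : ℝ, 0 < c → ∃! β : ℝ, β ∈ Set.Ioo 0 γ ∧
      c = β / (β * Real.log (β / γ) + (1 - β) * Real.log ((1 - β) / (1 - γ))) := by
  have hmono : StrictMonoOn (fun β => β / Lam γ β) (Set.Ioo 0 γ) := F_strictMono hγ0 hγ1
  simp only [show ∀ β : ℝ, β * Real.log (β / γ) + (1 - β) * Real.log ((1 - β) / (1 - γ))
    = Lam γ β from fun _ => rfl]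
  refine ⟨hmono, ?_⟩
  intro c hc
  obtain ⟨a, ha, hac⟩ := exists_small hγ0 hγ1 hc
  obtain ⟨b, hb, hbc⟩ := exists_big hγ0 hγ1 c
  have hab : a < b := by
    by_contra h
    push_neg at h
    rcases eq_or_lt_of_le h with h | h
    · rw [h] at hbc; linarith
    · have h2 : b / Lam γ b < a / Lam γ a := hmono hb ha h
      linarith
  have hsub : Set.Icc a b ⊆ Set.Ioo 0 γ := fun x hx =>
    ⟨lt_of_lt_of_le ha.1 hx.1, lt_of_le_of_lt hx.2 hb.2⟩
  have hcont : ContinuousOn (fun β => β / Lam γ β) (Set.Icc a b) := by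
    apply ContinuousOn.div continuousOn_id ((lam_continuousOn hγ0 hγ1).mono hsub)
    intro x hx
    exact (lam_pos hγ0 hγ1 (hsub hx).1 (hsub hx).2).ne'
  have hivt := intermediate_value_Icc hab.le hcont
  have hcmem : c ∈ Set.Icc (a / Lam γ a) (b / Lam γ b) := ⟨hac.le, hbc.le⟩
  obtain ⟨x, hx, hgx⟩ := hivt hcmem
  have hgx' : x / Lam γ x = c := hgx
  refine ⟨x, ⟨hsub hx, hgx'.symm⟩, ?_⟩
  intro y ⟨hy, hyc⟩
  have h3 : y / Lam γ y = x / Lam γ x := by rw [← hyc]; exact hgx'.symm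
  exact hmono.injOn hy (hsub hx) h3
end

section
/- Consider a two-state Gilbert–Elliott Markov chain with transition probabilities p₁₀ (from state 1 to 0) and p₀₁ (from 0 to 1), both in (0,1). Let T^(1) be the first hitting time of state 1 starting from state 1, and T^(0) the first hitting time of state 1 starting from state 0. Let T^(1)_1, …, T^(1)_{K₀+1} be i.i.d. copies of T^(1), where K₀ = min{ m ≥ 0 : Σ_{d=0}^m (1−p₁₀)^d p₁₀ + p₀₁ ≥ 1 }. Then Σ_{d=1}^{K₀+1} T^(1)_d stochastically dominates T^(0): for all t, P(Σ_{d=1}^{K₀+1} T^(1)_d > t) ≥ P(T^(0) > t). -/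
open MeasureTheory ProbabilityTheory

set_option maxHeartbeats 1000000

theorem stmt_10 {Ω : Type*} [MeasureSpace Ω] [IsProbabilityMeasure (volume : Measure Ω)]
    (p10 p01 : ℝ) (hp10 : p10 ∈ Set.Ioo (0:ℝ) 1) (hp01 : p01 ∈ Set.Ioo (0:ℝ) 1)
    (K0 : ℕ)
    (hK0 : K0 = sInf {m : ℕ | (∑ d ∈ Finset.range (m + 1), (1 - p10) ^ d * p10) + p01 ≥ 1})
    (T1 : Fin (K0 + 1) → Ω → ℕ) (T0 : Ω → ℕ)
    (hmeas1 : ∀ d, Measurable (T1 d)) (hmeas0 : Measurable T0)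
    (hindep : iIndepFun T1 volume)
    (hdist1 : ∀ d, volume {ω | T1 d ω = 1} = ENNReal.ofReal (1 - p10))
    (hdist2 : ∀ d, ∀ t : ℕ, 2 ≤ t →
      volume {ω | T1 d ω = t} = ENNReal.ofReal (p10 * (1 - p01) ^ (t - 2) * p01))
    (hdist0 : ∀ t : ℕ, volume {ω | t < T0 ω} = ENNReal.ofReal ((1 - p01) ^ t)) :
    ∀ t : ℕ, volume {ω | t < ∑ d, T1 d ω} ≥ volume {ω | t < T0 ω} := by
  obtain ⟨hp10', hp10''⟩ := hp10
  obtain ⟨hp01', hp01''⟩ := hp01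
  set a : ℝ := 1 - p10 with hadef
  set b : ℝ := 1 - p01 with hbdef
  have ha0 : 0 ≤ a := by simp only [hadef]; linarith
  have ha1 : a < 1 := by simp only [hadef]; linarith
  have hb0 : 0 ≤ b := by simp only [hbdef]; linarith
  have hb1 : b < 1 := by simp only [hbdef]; linarith
  -- geometric sum identity
  have hgeom : ∀ m : ℕ, (∑ d ∈ Finset.range m, a ^ d * p10) = 1 - a ^ m := by
    intro m
    rw [← Finset.sum_mul, geom_sum_eq (ne_of_lt ha1)]
    have h1 : a - 1 = -p10 := by simp only [hadef]; ring
    rw [h1, div_mul_eq_mul_div, div_eq_iff (neg_ne_zero.2 hp10'.ne')]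
    ring
  -- key inequality from definition of K0
  have hkey : a ^ (K0 + 1) ≤ p01 := by
    have hne : {m : ℕ | (∑ d ∈ Finset.range (m + 1), a ^ d * p10) + p01 ≥ 1}.Nonempty := by
      obtain ⟨m, hm⟩ := exists_pow_lt_of_lt_one hp01' ha1
      refine ⟨m, ?_⟩
      have := pow_le_pow_of_le_one ha0 ha1.le (Nat.le_add_right m 1)
      simp only [Set.mem_setOf_eq, hgeom]
      linarith
    have hmem := Nat.sInf_mem hne
    rw [← hK0] at hmem
    simp only [Set.mem_setOf_eq, hgeom] at hmem
    linarith
  -- measurability of level sets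
  have hmeq : ∀ (d : Fin (K0+1)) (s : ℕ), MeasurableSet {ω | T1 d ω = s} :=
    fun d s => hmeas1 d (measurableSet_singleton s)
  -- T1 d = 0 has probability zero
  have hZ : ∀ d, volume {ω | T1 d ω = 0} = 0 := by
    intro d
    have hdisj : Pairwise (Function.onFun Disjoint fun s : ℕ => {ω | T1 d ω = s + 1}) := by
      intro i j hij
      rw [Function.onFun, Set.disjoint_left]
      intro ω h1 h2
      simp only [Set.mem_setOf_eq] at h1 h2
      omega
    have hU : {ω | 1 ≤ T1 d ω} = ⋃ s : ℕ, {ω | T1 d ω = s + 1} := by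
      ext ω
      simp only [Set.mem_setOf_eq, Set.mem_iUnion]
      constructor
      · intro h; exact ⟨T1 d ω - 1, by omega⟩
      · rintro ⟨s, hs⟩; omega
    have h1 : volume {ω | 1 ≤ T1 d ω} = ∑' s : ℕ, volume {ω | T1 d ω = s + 1} := by
      rw [hU, measure_iUnion hdisj (fun s => hmeq d (s + 1))]
    have htail : ∀ s : ℕ, volume {ω | T1 d ω = s + 2} = ENNReal.ofReal (p10 * b ^ s * p01) := by
      intro s
      have := hdist2 d (s + 2) (by omega)
      simpa using this
    have hsummable : Summable (fun s : ℕ => p10 * b ^ s * p01) := by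
      have := summable_geometric_of_lt_one hb0 hb1
      exact (this.mul_left p10).mul_right p01
    have htsum : (∑' s : ℕ, p10 * b ^ s * p01) = p10 := by
      have h2 : (∑' s : ℕ, p10 * b ^ s * p01) = (p10 * p01) * ∑' s : ℕ, b ^ s := by
        rw [← tsum_mul_left]
        exact tsum_congr (fun s => by ring)
      rw [h2, tsum_geometric_of_lt_one hb0 hb1]
      have : 1 - b = p01 := by simp only [hbdef]; ring
      rw [this]
      field_simp
    have h2 : (∑' s : ℕ, volume {ω | T1 d ω = s + 1}) = 1 := by
      rw [tsum_eq_zero_add' (f := fun s : ℕ => volume {ω | T1 d ω = s + 1}) ENNReal.summable]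
      simp only [zero_add]
      rw [hdist1 d]
      have h3 : ∀ s : ℕ, volume {ω | T1 d ω = s + 1 + 1} = ENNReal.ofReal (p10 * b ^ s * p01) :=
        fun s => htail s
      simp_rw [h3]
      rw [← ENNReal.ofReal_tsum_of_nonneg (fun s => by positivity) hsummable, htsum,
        ← ENNReal.ofReal_add (by linarith) (by linarith)]
      have h4 : a + p10 = 1 := by simp only [hadef]; ring
      rw [h4, ENNReal.ofReal_one]
    have hone : volume {ω | 1 ≤ T1 d ω} = 1 := by rw [h1, h2]
    have hc : {ω | T1 d ω = 0} = {ω | 1 ≤ T1 d ω}ᶜ := by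
      ext ω; simp only [Set.mem_setOf_eq, Set.mem_compl_iff, not_le]; omega
    rw [hc, prob_compl_eq_one_sub, hone, tsub_self]
    exact hmeas1 d measurableSet_Ici
  -- CDF of T1 d at r+1
  have hA : ∀ (d : Fin (K0+1)) (r : ℕ),
      volume {ω | T1 d ω ≤ r + 1} = ENNReal.ofReal (1 - p10 * b ^ r) := by
    intro d r
    have hU : {ω | T1 d ω ≤ r + 1} = ⋃ s ∈ Finset.range (r + 2), {ω | T1 d ω = s} := by
      ext ω
      simp only [Set.mem_setOf_eq, Set.mem_iUnion, Finset.mem_range]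
      constructor
      · intro h; exact ⟨T1 d ω, by omega, rfl⟩
      · rintro ⟨s, hs, rfl⟩; omega
    have hdisj : Set.PairwiseDisjoint (↑(Finset.range (r + 2)))
        (fun s : ℕ => {ω | T1 d ω = s}) := by
      intro i _ j _ hij
      rw [Function.onFun, Set.disjoint_left]
      intro ω h1 h2
      simp only [Set.mem_setOf_eq] at h1 h2
      omega
    rw [hU, measure_biUnion_finset hdisj (fun s _ => hmeq d s)]
    rw [Finset.sum_range_succ', Finset.sum_range_succ']
    simp only [hZ d, add_zero]
    rw [hdist1 d]
    have htail : ∀ s : ℕ, volume {ω | T1 d ω = s + 1 + 1} = ENNReal.ofReal (p10 * b ^ s * p01) := by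
      intro s
      have h5 := hdist2 d (s + 2) (by omega)
      simpa using h5
    simp_rw [htail]
    rw [← ENNReal.ofReal_sum_of_nonneg (fun s _ => by positivity)]
    have hsum : (∑ s ∈ Finset.range r, p10 * b ^ s * p01) = p10 * (1 - b ^ r) := by
      have h1 : b - 1 = -p01 := by simp only [hbdef]; ring
      calc (∑ s ∈ Finset.range r, p10 * b ^ s * p01)
          = p10 * p01 * ∑ s ∈ Finset.range r, b ^ s := by
            rw [Finset.mul_sum]; exact Finset.sum_congr rfl (fun s _ => by ring)
        _ = p10 * p01 * ((b ^ r - 1) / (b - 1)) := by rw [geom_sum_eq (ne_of_lt hb1)]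
        _ = p10 * (1 - b ^ r) := by rw [h1]; field_simp [hp01'.ne']; ring
    rw [hsum, ← ENNReal.ofReal_add (by nlinarith [pow_le_one₀ hb0 hb1.le (n := r), pow_nonneg hb0 r]) (by linarith)]
    congr 1
    simp only [hadef]
    ring
  -- main argument
  intro t
  have hbpow_le : ∀ k : ℕ, ENNReal.ofReal (b ^ k) ≤ 1 := by
    intro k
    rw [← ENNReal.ofReal_one]
    exact ENNReal.ofReal_le_ofReal (pow_le_one₀ hb0 hb1.le)
  rcases t with _ | r
  · -- t = 0
    rw [hdist0 0, ge_iff_le]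
    have hsub : {ω | 0 < T1 0 ω} ⊆ {ω | 0 < ∑ d, T1 d ω} := by
      intro ω hω
      simp only [Set.mem_setOf_eq] at hω ⊢
      calc 0 < T1 0 ω := hω
        _ ≤ ∑ d, T1 d ω := Finset.single_le_sum (f := fun d => T1 d ω) (fun i _ => Nat.zero_le _) (Finset.mem_univ 0)
    have h1 : volume {ω | 0 < T1 0 ω} = 1 := by
      have hc : {ω | 0 < T1 0 ω} = {ω | T1 0 ω = 0}ᶜ := by
        ext ω; simp only [Set.mem_setOf_eq, Set.mem_compl_iff]; omega
      rw [hc, prob_compl_eq_one_sub (hmeq 0 0), hZ 0, tsub_zero]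
    calc ENNReal.ofReal (b ^ 0) ≤ 1 := hbpow_le 0
      _ = volume {ω | 0 < T1 0 ω} := h1.symm
      _ ≤ volume {ω | 0 < ∑ d, T1 d ω} := measure_mono hsub
  · -- t = r + 1
    rw [hdist0 (r + 1), ge_iff_le]
    set q : ℝ := 1 - p10 * b ^ r with hqdef
    have hx0 : (0:ℝ) ≤ b ^ r := pow_nonneg hb0 r
    have hx1 : b ^ r ≤ 1 := pow_le_one₀ hb0 hb1.le
    have hq0 : 0 ≤ q := by nlinarith
    -- independence gives the product formula
    have hInter : volume (⋂ d, {ω | T1 d ω ≤ r + 1})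
        = ∏ d : Fin (K0 + 1), volume {ω | T1 d ω ≤ r + 1} := by
      exact hindep.meas_iInter (fun d => ⟨Set.Iic (r + 1), measurableSet_Iic, rfl⟩)
    have hprod : volume (⋂ d, {ω | T1 d ω ≤ r + 1}) = ENNReal.ofReal (q ^ (K0 + 1)) := by
      rw [hInter]
      simp_rw [hA]
      rw [Finset.prod_const, Finset.card_univ, Fintype.card_fin, ENNReal.ofReal_pow hq0]
    have hsub : (⋂ d, {ω | T1 d ω ≤ r + 1})ᶜ ⊆ {ω | r + 1 < ∑ d, T1 d ω} := by
      intro ω hω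
      simp only [Set.mem_compl_iff, Set.mem_iInter, Set.mem_setOf_eq, not_forall, not_le] at hω
      obtain ⟨d, hd⟩ := hω
      simp only [Set.mem_setOf_eq]
      calc r + 1 < T1 d ω := hd
        _ ≤ ∑ d, T1 d ω := Finset.single_le_sum (f := fun d => T1 d ω) (fun i _ => Nat.zero_le _) (Finset.mem_univ d)
    have hmi : MeasurableSet (⋂ d, {ω | T1 d ω ≤ r + 1}) :=
      MeasurableSet.iInter (fun d => hmeas1 d measurableSet_Iic)
    have hcompl : volume (⋂ d, {ω | T1 d ω ≤ r + 1})ᶜ = 1 - ENNReal.ofReal (q ^ (K0 + 1)) := by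
      rw [prob_compl_eq_one_sub hmi, hprod]
    -- the real inequality via convexity
    have hreal : b ^ (r + 1) ≤ 1 - q ^ (K0 + 1) := by
      set x : ℝ := b ^ r with hxdef
      have hconv := (convexOn_pow (𝕜 := ℝ) (K0 + 1)).2 (Set.mem_Ici.2 zero_le_one)
        (Set.mem_Ici.2 ha0) (by linarith : (0:ℝ) ≤ 1 - x) hx0 (by ring)
      have hqx : (1 - x) • (1:ℝ) + x • a = q := by
        simp only [smul_eq_mul, hqdef, hadef]
        ring
      rw [hqx] at hconv
      simp only [smul_eq_mul, one_pow] at hconv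
      have han : a ^ (K0 + 1) ≤ 1 - b := by
        have : 1 - b = p01 := by simp only [hbdef]; ring
        rw [this]; exact hkey
      have hxb : x * b ≤ 1 - q ^ (K0 + 1) := by nlinarith
      calc b ^ (r + 1) = x * b := by rw [hxdef, pow_succ]
        _ ≤ 1 - q ^ (K0 + 1) := hxb
    -- put it together
    have hqn1 : ENNReal.ofReal (q ^ (K0 + 1)) ≤ 1 := by
      rw [← ENNReal.ofReal_one]
      exact ENNReal.ofReal_le_ofReal (pow_le_one₀ hq0 (by nlinarith))
    calc ENNReal.ofReal (b ^ (r + 1))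
        ≤ ENNReal.ofReal (1 - q ^ (K0 + 1)) := ENNReal.ofReal_le_ofReal hreal
      _ = 1 - ENNReal.ofReal (q ^ (K0 + 1)) := by
          rw [ENNReal.ofReal_sub 1 (pow_nonneg hq0 _), ENNReal.ofReal_one]
      _ = volume (⋂ d, {ω | T1 d ω ≤ r + 1})ᶜ := hcompl.symm
      _ ≤ volume {ω | r + 1 < ∑ d, T1 d ω} := measure_mono hsub
end

section
/- For a geometric random variable T^(0) with P(T^(0) > t) = (1−p₀₁)^t for integers t ≥ 0, and i.i.d. random variables T^(1)_d with P(T^(1)_d = 1) = 1−p₁₀, P(T^(1)_d > 1) = p₁₀, where for each d the residual after the first step dominates a geometric with parameter p₀₁: if Σ_{d=1}^{m+1} p₁₀(1−p₁₀)^{d−1} + p₀₁ ≥ 1 then for all integers t > m+1, P(Σ_{d=1}^{m+1} T^(1)_d > t) ≥ (1−p₀₁)^t. -/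
open MeasureTheory ProbabilityTheory

theorem stmt_11 {Ω : Type*} [MeasureSpace Ω] [IsProbabilityMeasure (volume : Measure Ω)]
    (p10 p01 : ℝ) (hp10 : p10 ∈ Set.Ioo (0:ℝ) 1) (hp01 : p01 ∈ Set.Ioo (0:ℝ) 1)
    (m : ℕ) (T1 : Fin (m + 1) → Ω → ℕ)
    (hmeas1 : ∀ d, Measurable (T1 d))
    (hindep : iIndepFun T1 volume)
    (hdist1 : ∀ d, volume {ω | T1 d ω = 1} = ENNReal.ofReal (1 - p10))
    (hdist2 : ∀ d, ∀ t : ℕ, 2 ≤ t →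
      volume {ω | T1 d ω = t} = ENNReal.ofReal (p10 * (1 - p01) ^ (t - 2) * p01))
    (hsum : (∑ d ∈ Finset.range (m + 1), p10 * (1 - p10) ^ d) + p01 ≥ 1) :
    ∀ t : ℕ, m + 1 < t →
      volume {ω | t < ∑ d, T1 d ω} ≥ ENNReal.ofReal ((1 - p01) ^ t) := by
  obtain ⟨hp10pos, hp10lt⟩ := hp10
  obtain ⟨hp01pos, hp01lt⟩ := hp01
  have h01nonneg : (0:ℝ) ≤ 1 - p01 := by linarith
  have h01lt : (1:ℝ) - p01 < 1 := by linarith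
  have h10nonneg : (0:ℝ) ≤ 1 - p10 := by linarith
  -- tail probability of a single T1 d
  have tail : ∀ d, ∀ u : ℕ, 1 ≤ u →
      volume {ω | u < T1 d ω} = ENNReal.ofReal (p10 * (1 - p01) ^ (u - 1)) := by
    intro d u hu
    have hset : {ω | u < T1 d ω} = ⋃ k : ℕ, {ω | T1 d ω = u + 1 + k} := by
      ext ω
      simp only [Set.mem_setOf_eq, Set.mem_iUnion]
      constructor
      · intro h; exact ⟨T1 d ω - (u + 1), by omega⟩
      · rintro ⟨k, hk⟩; omega
    have hmeaseq : ∀ (n : ℕ), MeasurableSet {ω | T1 d ω = n} := by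
      intro n
      exact hmeas1 d (measurableSet_singleton n)
    rw [hset, measure_iUnion]
    · have hterm : ∀ k : ℕ, volume {ω | T1 d ω = u + 1 + k}
          = ENNReal.ofReal (p10 * (1 - p01) ^ (u - 1) * p01 * (1 - p01) ^ k) := by
        intro k
        rw [hdist2 d (u + 1 + k) (by omega)]
        congr 1
        have he : u + 1 + k - 2 = (u - 1) + k := by omega
        rw [he, pow_add]; ring
      simp_rw [hterm]
      rw [← ENNReal.ofReal_tsum_of_nonneg]
      · congr 1
        rw [tsum_mul_left, tsum_geometric_of_lt_one h01nonneg h01lt]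
        have : (1:ℝ) - (1 - p01) = p01 := by ring
        rw [this]
        field_simp
      · intro n; positivity
      · exact (summable_geometric_of_lt_one h01nonneg h01lt).mul_left _
    · intro i j hij
      simp only [Function.onFun, Set.disjoint_left]
      intro ω h1 h2
      simp only [Set.mem_setOf_eq] at h1 h2
      omega
    · intro n; exact hmeaseq _
  intro t ht
  -- the events
  set S : Fin (m + 1) → Fin (m + 1) → Set Ω := fun d e =>
    T1 e ⁻¹' (if e = d then Set.Ioi (t - d.val) else {1}) with hS
  set E : Fin (m + 1) → Set Ω := fun d => ⋂ e ∈ Finset.Iic d, S d e with hE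
  have hEmem : ∀ d ω, ω ∈ E d ↔ (∀ e, e ≤ d → ω ∈ S d e) := by
    intro d ω
    simp [hE, Set.mem_iInter]
  have hSmem : ∀ d e ω, ω ∈ S d e ↔ (if e = d then t - d.val < T1 e ω else T1 e ω = 1) := by
    intro d e ω
    by_cases h : e = d <;> simp [hS, h]
  -- E d is contained in the target
  have hsub : ∀ d, E d ⊆ {ω | t < ∑ e, T1 e ω} := by
    intro d ω hω
    rw [hEmem] at hω
    have h1 : ∀ e, e < d → T1 e ω = 1 := by
      intro e he
      have := (hSmem d e ω).mp (hω e he.le)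
      rwa [if_neg he.ne] at this
    have h2 : t - d.val < T1 d ω := by
      have := (hSmem d d ω).mp (hω d le_rfl)
      rwa [if_pos rfl] at this
    have hge : ∑ e ∈ Finset.Iic d, T1 e ω ≤ ∑ e, T1 e ω :=
      Finset.sum_le_sum_of_subset (Finset.subset_univ _)
    have hIic : ∑ e ∈ Finset.Iic d, T1 e ω = T1 d ω + ∑ e ∈ Finset.Iio d, T1 e ω := by
      rw [← Finset.Iio_insert, Finset.sum_insert (by simp)]
    have hIio : ∑ e ∈ Finset.Iio d, T1 e ω = d.val := by
      rw [Finset.sum_congr rfl (fun e he => h1 e (Finset.mem_Iio.mp he))]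
      simp [Fin.card_Iio]
    have hd : d.val ≤ m := by have := d.isLt; omega
    simp only [Set.mem_setOf_eq]
    omega
  -- measure of E d
  have hmeasE : ∀ d, volume (E d)
      = ENNReal.ofReal ((1 - p10) ^ d.val * (p10 * (1 - p01) ^ (t - d.val - 1))) := by
    intro d
    have := hindep.meas_biInter (S := Finset.Iic d) (s := S d) ?_
    · rw [hE, this]
      have hins : Finset.Iic d = insert d (Finset.Iio d) := by
        rw [Finset.Iio_insert]
      rw [hins, Finset.prod_insert (by simp)]
      have hdd : S d d = T1 d ⁻¹' Set.Ioi (t - d.val) := by simp [hS]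
      have hpre : T1 d ⁻¹' Set.Ioi (t - d.val) = {ω | t - d.val < T1 d ω} := rfl
      have h1t : 1 ≤ t - d.val := by
        have := d.isLt
        omega
      rw [hdd, hpre, tail d _ h1t]
      have hrest : ∀ e ∈ Finset.Iio d, volume (S d e) = ENNReal.ofReal (1 - p10) := by
        intro e he
        have hne : e ≠ d := (Finset.mem_Iio.mp he).ne
        have : S d e = {ω | T1 e ω = 1} := by
          ext ω; simp [hS, hne]
        rw [this, hdist1]
      rw [Finset.prod_congr rfl hrest, Finset.prod_const, Fin.card_Iio,
        ← ENNReal.ofReal_pow h10nonneg, ← ENNReal.ofReal_mul (by positivity)]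
      rw [mul_comm]
    · intro e he
      by_cases h : e = d
      · subst h
        refine ⟨Set.Ioi (t - e.val), measurableSet_Ioi, ?_⟩
        simp [hS]
      · refine ⟨{1}, measurableSet_singleton 1, ?_⟩
        simp [hS, h]
  -- E d are measurable
  have hmeasSetE : ∀ d, MeasurableSet (E d) := by
    intro d
    refine Set.Finite.measurableSet_biInter (Finset.finite_toSet _) ?_
    intro e _
    by_cases h : e = d
    · subst h
      have : S e e = T1 e ⁻¹' Set.Ioi (t - e.val) := by simp [hS]
      rw [this]; exact hmeas1 e measurableSet_Ioi
    · have : S d e = T1 e ⁻¹' {1} := by simp [hS, h]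
      rw [this]; exact hmeas1 e (measurableSet_singleton 1)
  -- disjointness
  have hdisj : Pairwise (Function.onFun Disjoint E) := by
    intro d d' hne
    simp only [Function.onFun, Set.disjoint_left]
    intro ω h1 h2
    rw [hEmem] at h1 h2
    rcases lt_or_gt_of_ne hne with h | h
    · -- d < d' : from E d', T1 d ω = 1; from E d, t - d < T1 d ω
      have ha := (hSmem d' d ω).mp (h2 d h.le)
      rw [if_neg h.ne] at ha
      have hb := (hSmem d d ω).mp (h1 d le_rfl)
      rw [if_pos rfl] at hb
      have := d.isLt
      omega
    · have ha := (hSmem d d' ω).mp (h1 d' h.le)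
      rw [if_neg h.ne] at ha
      have hb := (hSmem d' d' ω).mp (h2 d' le_rfl)
      rw [if_pos rfl] at hb
      have := d'.isLt
      omega
  -- put it together
  have hunion : volume (⋃ d, E d) = ∑ d, volume (E d) := by
    rw [measure_iUnion hdisj hmeasSetE, tsum_fintype]
  have hmono : volume (⋃ d, E d) ≤ volume {ω | t < ∑ e, T1 e ω} :=
    measure_mono (Set.iUnion_subset hsub)
  have hsumE : ∑ d, volume (E d)
      = ENNReal.ofReal (∑ d : Fin (m + 1), (1 - p10) ^ d.val * (p10 * (1 - p01) ^ (t - d.val - 1))) := by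
    rw [ENNReal.ofReal_sum_of_nonneg (fun i _ => by positivity)]
    exact Finset.sum_congr rfl fun d _ => hmeasE d
  -- real inequality
  have hreal : (1 - p01) ^ t
      ≤ ∑ d : Fin (m + 1), (1 - p10) ^ d.val * (p10 * (1 - p01) ^ (t - d.val - 1)) := by
    have step1 : ∀ d : Fin (m + 1),
        (1 - p10) ^ d.val * (p10 * (1 - p01) ^ (t - 1))
          ≤ (1 - p10) ^ d.val * (p10 * (1 - p01) ^ (t - d.val - 1)) := by
      intro d
      have hle : (1 - p01) ^ (t - 1) ≤ (1 - p01) ^ (t - d.val - 1) :=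
        pow_le_pow_of_le_one h01nonneg h01lt.le (by omega)
      have : p10 * (1 - p01) ^ (t - 1) ≤ p10 * (1 - p01) ^ (t - d.val - 1) := by
        exact mul_le_mul_of_nonneg_left hle hp10pos.le
      exact mul_le_mul_of_nonneg_left this (by positivity)
    calc (1 - p01) ^ t = (1 - p01) ^ (t - 1) * (1 - p01) := by
          rw [← pow_succ]; congr 1; omega
      _ ≤ (1 - p01) ^ (t - 1) * (∑ d ∈ Finset.range (m + 1), p10 * (1 - p10) ^ d) := by
          apply mul_le_mul_of_nonneg_left (by linarith) (by positivity)
      _ = ∑ d : Fin (m + 1), (1 - p10) ^ d.val * (p10 * (1 - p01) ^ (t - 1)) := by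
          rw [Finset.mul_sum, ← Fin.sum_univ_eq_sum_range
            (fun d => (1 - p01) ^ (t - 1) * (p10 * (1 - p10) ^ d))]
          exact Finset.sum_congr rfl fun d _ => by ring
      _ ≤ _ := Finset.sum_le_sum fun d _ => step1 d
  calc ENNReal.ofReal ((1 - p01) ^ t)
      ≤ ENNReal.ofReal (∑ d : Fin (m + 1), (1 - p10) ^ d.val * (p10 * (1 - p01) ^ (t - d.val - 1))) :=
        ENNReal.ofReal_le_ofReal hreal
    _ = ∑ d, volume (E d) := hsumE.symm
    _ = volume (⋃ d, E d) := hunion.symm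
    _ ≤ volume {ω | t < ∑ e, T1 e ω} := hmono
end

section
/- Suppose K = K(n) satisfies K(n)/log n → ∞ as n → ∞ (K ∈ ω(log n)). For the memoryless erasure channel with success probability γ ∈ (0,1), with T(n,K) the max over n i.i.d. negative-binomial(K, γ) variables, the normalized expected completion time satisfies E[T(n,K)]/K → 1/γ, and hence the throughput η(n,K) = K/E[T(n,K)] → γ. -/
open MeasureTheory ProbabilityTheory Filter

section Aux
open Real


-- reindexing independence along an injective map
lemma iIndepFun_precomp {Ω ι ι' β : Type*} [Nonempty ι'] {mΩ : MeasurableSpace Ω}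
    {mβ : MeasurableSpace β} {μ : Measure Ω} {f : ι → Ω → β}
    (hf : iIndepFun f μ) {g : ι' → ι} (hg : Function.Injective g) :
    iIndepFun (fun i => f (g i)) μ := by
  rw [iIndepFun_iff_measure_inter_preimage_eq_mul] at hf ⊢
  intro S sets hsets
  classical
  have hmeas : ∀ i, i ∈ S.image g → MeasurableSet (sets (Function.invFun g i)) := by
    intro i hi
    obtain ⟨j, hj, rfl⟩ := Finset.mem_image.mp hi
    rw [Function.leftInverse_invFun hg j]
    exact hsets j hj
  have key := hf (S.image g) (sets := fun i => sets (Function.invFun g i)) hmeas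
  calc μ (⋂ i ∈ S, f (g i) ⁻¹' sets i)
      = μ (⋂ i ∈ S.image g, f i ⁻¹' sets (Function.invFun g i)) := by
        congr 1
        have : ⋂ i ∈ Finset.image g S, f i ⁻¹' sets (Function.invFun g i)
            = ⋂ j ∈ S, f (g j) ⁻¹' sets (Function.invFun g (g j)) := by
          rw [show (⋂ i ∈ Finset.image g S, f i ⁻¹' sets (Function.invFun g i))
              = ⋂ i ∈ (Finset.image g S : Set ι), f i ⁻¹' sets (Function.invFun g i) by simp,
            Finset.coe_image, Set.biInter_image]
          simp
        rw [this]
        exact Set.iInter₂_congr fun i _ => by rw [Function.leftInverse_invFun hg i]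
    _ = ∏ i ∈ S.image g, μ (f i ⁻¹' sets (Function.invFun g i)) := key
    _ = ∏ i ∈ S, μ (f (g i) ⁻¹' sets i) := by
        rw [Finset.prod_image (fun a _ b _ h => hg h)]
        exact Finset.prod_congr rfl fun i _ => by rw [Function.leftInverse_invFun hg i]


section Geom
set_option maxHeartbeats 1000000
set_option linter.unusedSectionVars false

variable {Ω : Type*} [MeasureSpace Ω] [IsProbabilityMeasure (volume : Measure Ω)]
  {γ : ℝ} (hγ0 : 0 < γ) (hγ1 : γ < 1) {X : Ω → ℕ} (hm : Measurable X)
  (hX : ∀ t : ℕ, 1 ≤ t → volume {ω | X ω = t} = ENNReal.ofReal (γ * (1 - γ) ^ (t - 1)))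

include hγ0 hγ1 hm hX

lemma geom_map_succ (s : ℕ) :
    (volume.map X) {s + 1} = ENNReal.ofReal (γ * (1 - γ) ^ s) := by
  rw [Measure.map_apply hm (measurableSet_singleton _)]
  have : X ⁻¹' {s + 1} = {ω | X ω = s + 1} := rfl
  rw [this, hX (s+1) (by omega)]
  simp

lemma geom_zero : (volume.map X) {0} = 0 := by
  haveI : IsProbabilityMeasure (volume.map X) := Measure.isProbabilityMeasure_map hm.aemeasurable
  set ν := volume.map X
  have hx : 0 ≤ 1 - γ := by linarith
  have hx1 : 1 - γ < 1 := by linarith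
  have hcompl : ({0}ᶜ : Set ℕ) = ⋃ s : ℕ, {s + 1} := by
    ext t
    simp only [Set.mem_compl_iff, Set.mem_singleton_iff, Set.mem_iUnion]
    constructor
    · intro h; exact ⟨t - 1, by omega⟩
    · rintro ⟨s, rfl⟩; omega
  have hdisj : Pairwise (Function.onFun Disjoint fun s : ℕ => ({s + 1} : Set ℕ)) := by
    intro a b hab
    simp only [Function.onFun, Set.disjoint_singleton]
    omega
  have hsum : Summable fun s : ℕ => γ * (1 - γ) ^ s :=
    (summable_geometric_of_lt_one hx hx1).mul_left _
  have htsum : ∑' s : ℕ, γ * (1 - γ) ^ s = 1 := by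
    rw [tsum_mul_left, tsum_geometric_of_lt_one hx hx1]
    field_simp
    rw [sub_sub_cancel, div_self hγ0.ne']
  have hc : ν ({0}ᶜ) = 1 := by
    rw [hcompl, measure_iUnion hdisj fun s => measurableSet_singleton _]
    have h2 : ∀ s : ℕ, ν {s + 1} = ENNReal.ofReal (γ * (1 - γ) ^ s) :=
      fun s => geom_map_succ hγ0 hγ1 hm hX s
    simp_rw [h2]
    rw [← ENNReal.ofReal_tsum_of_nonneg (fun s => by positivity) hsum, htsum]
    simp
  have hadd : ν {0} + 1 = 1 := by
    have h3 := measure_add_measure_compl (μ := ν) (measurableSet_singleton (0:ℕ))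
    rw [hc] at h3
    simpa using h3
  nth_rewrite 2 [show (1:ENNReal) = 0 + 1 from (zero_add 1).symm] at hadd
  exact WithTop.add_right_cancel ENNReal.one_ne_top hadd

lemma geom_integral (f : ℕ → ℝ)
    (hfi : Integrable (fun ω => f (X ω)) volume)
    (hsum : Summable fun s : ℕ => γ * (1 - γ) ^ s * f (s + 1)) :
    ∫ ω, f (X ω) = ∑' s : ℕ, γ * (1 - γ) ^ s * f (s + 1) := by
  haveI : IsProbabilityMeasure (volume.map X) := Measure.isProbabilityMeasure_map hm.aemeasurable
  set ν := volume.map X with hν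
  have hfm : AEStronglyMeasurable f ν := (measurable_from_top (f := f)).aestronglyMeasurable
  have hfi' : Integrable f ν :=
    (integrable_map_measure hfm hm.aemeasurable).mpr hfi
  have h1 : ∫ ω, f (X ω) = ∫ t, f t ∂ν := (integral_map hm.aemeasurable hfm).symm
  rw [h1, integral_countable' hfi']
  show ∑' x : ℕ, (ν {x}).toReal • f x = _
  have hterm : ∀ s : ℕ, (ν {s + 1}).toReal • f (s + 1) = γ * (1 - γ) ^ s * f (s + 1) := by
    intro s
    rw [geom_map_succ hγ0 hγ1 hm hX s, ENNReal.toReal_ofReal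
      (by nlinarith [pow_nonneg (by linarith : (0:ℝ) ≤ 1 - γ) s])]
    simp [mul_assoc]
  have h0 : (ν {0}).toReal • f 0 = 0 := by
    rw [geom_zero hγ0 hγ1 hm hX]; simp
  have hsum' : Summable fun s : ℕ => (ν {s + 1}).toReal • f (s + 1) := by
    simpa only [hterm] using hsum
  rw [Summable.tsum_eq_zero_add ((summable_nat_add_iff 1).mp hsum'), h0, zero_add]
  exact tsum_congr hterm

lemma geom_mean (hint : Integrable (fun ω => (X ω : ℝ)) volume) :
    ∫ ω, (X ω : ℝ) = 1 / γ := by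
  have hx : 0 ≤ 1 - γ := by linarith
  have hx1 : |1 - γ| < 1 := by rw [abs_of_nonneg hx]; linarith
  have hs1 : Summable fun s : ℕ => (s : ℝ) * (1 - γ) ^ s := by
    have := summable_pow_mul_geometric_of_norm_lt_one (R := ℝ) 1 (by simpa using hx1)
    simpa using this
  have hs2 : Summable fun s : ℕ => (1 - γ) ^ s := summable_geometric_of_lt_one hx (by linarith)
  have heq : (fun s : ℕ => γ * (1 - γ) ^ s * ((s + 1 : ℕ) : ℝ))
      = fun s : ℕ => γ * ((s : ℝ) * (1 - γ) ^ s) + γ * ((1 - γ) ^ s) := by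
    funext s; push_cast; ring
  have hsum : Summable fun s : ℕ => γ * (1 - γ) ^ s * ((s + 1 : ℕ) : ℝ) := by
    rw [heq]; exact ((hs1.mul_left γ).add (hs2.mul_left γ))
  rw [geom_integral hγ0 hγ1 hm hX (fun t => (t : ℝ)) hint hsum, heq,
    Summable.tsum_add (hs1.mul_left γ) (hs2.mul_left γ), tsum_mul_left, tsum_mul_left,
    tsum_coe_mul_geometric_of_norm_lt_one (by simpa using hx1),
    tsum_geometric_of_lt_one hx (by linarith)]
  have h1 : 1 - (1 - γ) = γ := by ring
  rw [h1]
  field_simp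
  ring

lemma geom_mgf {θ : ℝ} (hθ : 0 < θ) (hq : (1 - γ) * Real.exp θ < 1) :
    Integrable (fun ω => Real.exp (θ * X ω)) volume ∧
    ∫ ω, Real.exp (θ * X ω) = γ * Real.exp θ / (1 - (1 - γ) * Real.exp θ) := by
  haveI : IsProbabilityMeasure (volume.map X) := Measure.isProbabilityMeasure_map hm.aemeasurable
  have hx : 0 ≤ 1 - γ := by linarith
  set q : ℝ := (1 - γ) * Real.exp θ with hqdef
  have hq0 : 0 ≤ q := by positivity
  have hkey : ∀ s : ℕ, γ * (1 - γ) ^ s * Real.exp (θ * ((s + 1 : ℕ) : ℝ))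
      = (γ * Real.exp θ) * q ^ s := by
    intro s
    have h1 : Real.exp (θ * ((s + 1 : ℕ) : ℝ)) = Real.exp θ ^ s * Real.exp θ := by
      push_cast
      rw [mul_add, mul_one, Real.exp_add, mul_comm θ (s : ℝ), Real.exp_nat_mul]
    rw [h1, hqdef, mul_pow]
    ring
  have hsumq : Summable fun s : ℕ => (γ * Real.exp θ) * q ^ s :=
    (summable_geometric_of_lt_one hq0 hq).mul_left _
  have hsum : Summable fun s : ℕ => γ * (1 - γ) ^ s * Real.exp (θ * ((s + 1 : ℕ) : ℝ)) := by
    simpa only [hkey] using hsumq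
  have hint : Integrable (fun ω => Real.exp (θ * X ω)) volume := by
    have hfm : AEStronglyMeasurable (fun t : ℕ => Real.exp (θ * t)) (volume.map X) :=
      (measurable_from_top (f := fun t : ℕ => Real.exp (θ * t))).aestronglyMeasurable
    rw [show (fun ω => Real.exp (θ * X ω)) = (fun t : ℕ => Real.exp (θ * t)) ∘ X from rfl,
      ← integrable_map_measure hfm hm.aemeasurable]
    refine ⟨hfm, ?_⟩
    have hfin : (∫⁻ t : ℕ, (‖Real.exp (θ * t)‖₊ : ENNReal) ∂(volume.map X)) < ⊤ := by
      rw [lintegral_countable' (fun t : ℕ => (‖Real.exp (θ * t)‖₊ : ENNReal))]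
      rw [tsum_eq_zero_add' ENNReal.summable]
      have h0 : (‖Real.exp (θ * (0:ℕ))‖₊ : ENNReal) * (volume.map X) {0} = 0 := by
        rw [geom_zero hγ0 hγ1 hm hX]; simp
      rw [h0, zero_add]
      have hterm : ∀ s : ℕ, (‖Real.exp (θ * ((s+1:ℕ) : ℝ))‖₊ : ENNReal) * (volume.map X) {s + 1}
          = ENNReal.ofReal ((γ * Real.exp θ) * q ^ s) := by
        intro s
        rw [geom_map_succ hγ0 hγ1 hm hX s, ← enorm_eq_nnnorm, Real.enorm_eq_ofReal (Real.exp_nonneg _),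
          ← ENNReal.ofReal_mul (Real.exp_nonneg _), ← hkey s]
        ring_nf
      simp_rw [hterm]
      rw [← ENNReal.ofReal_tsum_of_nonneg (fun s => by positivity) hsumq]
      exact ENNReal.ofReal_lt_top
    exact hfin
  refine ⟨hint, ?_⟩
  rw [geom_integral hγ0 hγ1 hm hX (fun t : ℕ => Real.exp (θ * t)) hint hsum]
  simp_rw [hkey]
  rw [tsum_mul_left, tsum_geometric_of_lt_one hq0 hq]
  rw [div_eq_mul_inv]

end Geom


end Aux

set_option maxHeartbeats 1000000 in
theorem stmt_17 {Ω : Type*} [MeasureSpace Ω] [IsProbabilityMeasure (volume : Measure Ω)]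
    (γ : ℝ) (hγ : γ ∈ Set.Ioo (0:ℝ) 1) (K : ℕ → ℕ)
    (hK : Tendsto (fun n : ℕ => (K n : ℝ) / Real.log n) atTop atTop)
    (G : ℕ × ℕ → Ω → ℕ)
    (hmeas : ∀ p, Measurable (G p))
    (hindep : iIndepFun G volume)
    (hgeom : ∀ p, ∀ t : ℕ, 1 ≤ t →
      volume {ω | G p ω = t} = ENNReal.ofReal (γ * (1 - γ) ^ (t - 1)))
    (hint : ∀ p, Integrable (fun ω => (G p ω : ℝ)) volume) :
    Tendsto (fun n : ℕ =>
        (∫ ω, ((((Finset.range n).sup fun i => ∑ j ∈ Finset.range (K n), G (i, j) ω : ℕ)) : ℝ))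
          / (K n : ℝ)) atTop (nhds (1 / γ)) ∧
    Tendsto (fun n : ℕ => (K n : ℝ) /
        ∫ ω, ((((Finset.range n).sup fun i => ∑ j ∈ Finset.range (K n), G (i, j) ω : ℕ)) : ℝ))
      atTop (nhds γ) := by
  classical
  obtain ⟨hγ0, hγ1⟩ := hγ
  have key : Tendsto (fun n : ℕ =>
      (∫ ω, ((((Finset.range n).sup fun i => ∑ j ∈ Finset.range (K n), G (i, j) ω : ℕ)) : ℝ))
        / (K n : ℝ)) atTop (nhds (1 / γ)) := by
    set S : ℕ → ℕ → Ω → ℕ := fun n i ω => ∑ j ∈ Finset.range (K n), G (i, j) ω with hSdef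
    set E : ℕ → ℝ := fun n =>
      ∫ ω, ((((Finset.range n).sup fun i => S n i ω : ℕ)) : ℝ) with hEdef
    show Tendsto (fun n : ℕ => E n / (K n : ℝ)) atTop (nhds (1 / γ))
    have hmeasS : ∀ n i, Measurable (S n i) := by
      intro n i
      exact Finset.measurable_sum _ fun j _ => hmeas (i, j)
    have hcastS : ∀ n i, (fun ω => ((S n i ω : ℕ) : ℝ))
        = fun ω => ∑ j ∈ Finset.range (K n), ((G (i, j) ω : ℕ) : ℝ) := by
      intro n i
      funext ω
      simp [hSdef, Nat.cast_sum]
    have hintS : ∀ n i, Integrable (fun ω => ((S n i ω : ℕ) : ℝ)) volume := by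
      intro n i
      rw [hcastS n i]
      exact integrable_finset_sum _ fun j _ => hint (i, j)
    have hvalS : ∀ n i, ∫ ω, ((S n i ω : ℕ) : ℝ) = (K n : ℝ) / γ := by
      intro n i
      rw [hcastS n i, integral_finset_sum _ fun j _ => hint (i, j)]
      have h1 : ∀ j ∈ Finset.range (K n), ∫ ω, ((G (i, j) ω : ℕ) : ℝ) = 1 / γ := by
        intro j _
        exact geom_mean hγ0 hγ1 (hmeas (i, j)) (hgeom (i, j)) (hint (i, j))
      rw [Finset.sum_congr rfl h1]
      simp
      ring
    -- measurability & integrability of the max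
    have hmeasM : ∀ n, Measurable (fun ω => (Finset.range n).sup fun i => S n i ω) := by
      intro n
      have h1 : ∀ s : Finset ℕ, Measurable (fun ω => s.sup fun i => S n i ω) := by
        intro s
        induction s using Finset.induction_on with
        | empty => simpa using measurable_const
        | insert _ _ hnotmem ih =>
            simp_rw [Finset.sup_insert]
            exact Measurable.sup (hmeasS n _) ih
      exact h1 _
    have hmeasMR : ∀ n, Measurable (fun ω => ((((Finset.range n).sup fun i => S n i ω) : ℕ) : ℝ)) :=
      fun n => measurable_from_top.comp (hmeasM n)
    have hMle : ∀ n ω, ((((Finset.range n).sup fun i => S n i ω) : ℕ) : ℝ)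
        ≤ ∑ i ∈ Finset.range n, ((S n i ω : ℕ) : ℝ) := by
      intro n ω
      have h1 : ((Finset.range n).sup fun i => S n i ω) ≤ ∑ i ∈ Finset.range n, S n i ω :=
        Finset.sup_le fun i hi =>
          Finset.single_le_sum (f := fun i => S n i ω) (fun _ _ => Nat.zero_le _) hi
      calc ((((Finset.range n).sup fun i => S n i ω) : ℕ) : ℝ)
          ≤ ((∑ i ∈ Finset.range n, S n i ω : ℕ) : ℝ) := Nat.cast_le.mpr h1
        _ = ∑ i ∈ Finset.range n, ((S n i ω : ℕ) : ℝ) := by push_cast; rfl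
    have hintM : ∀ n, Integrable (fun ω => ((((Finset.range n).sup fun i => S n i ω) : ℕ) : ℝ))
        volume := by
      intro n
      refine Integrable.mono (integrable_finset_sum (Finset.range n) fun i _ => hintS n i)
        (hmeasMR n).aestronglyMeasurable (ae_of_all _ fun ω => ?_)
      rw [Real.norm_of_nonneg (by positivity),
        Real.norm_of_nonneg (Finset.sum_nonneg fun i _ => by positivity)]
      exact hMle n ω
    -- lower bound
    have hlow : ∀ n, 1 ≤ n → (K n : ℝ) / γ ≤ E n := by
      intro n hn
      have h1 : ∀ ω, ((S n 0 ω : ℕ) : ℝ) ≤ ((((Finset.range n).sup fun i => S n i ω) : ℕ) : ℝ) :=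
        fun ω => Nat.cast_le.mpr
          (Finset.le_sup (f := fun i => S n i ω) (Finset.mem_range.mpr hn))
      calc (K n : ℝ) / γ = ∫ ω, ((S n 0 ω : ℕ) : ℝ) := (hvalS n 0).symm
        _ ≤ E n := integral_mono (hintS n 0) (hintM n) h1
    -- eventual positivity of K
    have hK1 : ∀ᶠ n in atTop, 1 ≤ K n := by
      filter_upwards [hK.eventually_ge_atTop 1, eventually_ge_atTop 3] with n h1 h3
      by_contra hcon
      push_neg at hcon
      have hK0 : K n = 0 := by omega
      rw [hK0] at h1
      have hlog : (0:ℝ) < Real.log n := by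
        apply Real.log_pos
        exact_mod_cast Nat.lt_of_lt_of_le (by norm_num) h3
      simp only [Nat.cast_zero, zero_div] at h1
      linarith
    have hlogn0 : Tendsto (fun n : ℕ => Real.log n / (K n : ℝ)) atTop (nhds 0) := by
      have h := hK.inv_tendsto_atTop
      have heq : (fun n : ℕ => ((K n : ℝ) / Real.log n))⁻¹
          = fun n : ℕ => Real.log n / (K n : ℝ) := by
        funext n
        simp [Pi.inv_apply, inv_div]
      rwa [heq] at h
    -- upper bound via Chernoff/Jensen, for a fixed admissible θ
    have hup : ∀ θ : ℝ, 0 < θ → (1 - γ) * Real.exp θ < 1 → ∀ n : ℕ, 1 ≤ n →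
        θ * E n ≤ Real.log n
          + (K n : ℝ) * Real.log (γ * Real.exp θ / (1 - (1 - γ) * Real.exp θ)) := by
      intro θ hθ hq n hn
      set m : ℝ := γ * Real.exp θ / (1 - (1 - γ) * Real.exp θ) with hmdef
      have hqpos : 0 < 1 - (1 - γ) * Real.exp θ := by linarith
      have hmpos : 0 < m := by
        rw [hmdef]; positivity
      -- independence of the row (i, ·)
      have hiip : ∀ i : ℕ, iIndepFun
          (fun j : ℕ => fun ω => ((G (i, j) ω : ℕ) : ℝ)) volume := by
        intro i
        have hinj : Function.Injective (fun j : ℕ => (i, j)) := fun a b h => by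
          simpa using congrArg Prod.snd h
        have h1 : iIndepFun (fun j : ℕ => G (i, j)) volume :=
          iIndepFun_precomp hindep hinj
        exact h1.comp (fun _ => (Nat.cast : ℕ → ℝ)) (fun _ => measurable_from_top)
      have hmeasGR : ∀ p, Measurable (fun ω => ((G p ω : ℕ) : ℝ)) :=
        fun p => measurable_from_top.comp (hmeas p)
      have hintExpG : ∀ p, Integrable (fun ω => Real.exp (θ * ((G p ω : ℕ) : ℝ))) volume :=
        fun p => (geom_mgf hγ0 hγ1 (hmeas p) (hgeom p) hθ hq).1
      have hmgfG : ∀ p, mgf (fun ω => ((G p ω : ℕ) : ℝ)) volume θ = m :=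
        fun p => (geom_mgf hγ0 hγ1 (hmeas p) (hgeom p) hθ hq).2
      -- sum as function sum
      have hfuneq : ∀ i, (fun ω => ((S n i ω : ℕ) : ℝ))
          = ∑ j ∈ Finset.range (K n), (fun ω => ((G (i, j) ω : ℕ) : ℝ)) := by
        intro i
        funext ω
        rw [Finset.sum_apply]
        simp [hSdef, Nat.cast_sum]
      have hmgfS : ∀ i, ∫ ω, Real.exp (θ * ((S n i ω : ℕ) : ℝ)) = m ^ K n := by
        intro i
        have h1 : ∫ ω, Real.exp (θ * ((S n i ω : ℕ) : ℝ))
            = mgf (fun ω => ((S n i ω : ℕ) : ℝ)) volume θ := rfl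
        rw [h1, hfuneq i, iIndepFun.mgf_sum (hiip i) (fun j => hmeasGR (i, j))]
        simp [hmgfG]
      have hintExpS : ∀ i, Integrable (fun ω => Real.exp (θ * ((S n i ω : ℕ) : ℝ))) volume := by
        intro i
        have h1 := iIndepFun.integrable_exp_mul_sum (hiip i) (fun j => hmeasGR (i, j))
          (s := Finset.range (K n)) (fun j _ => hintExpG (i, j))
        rw [← hfuneq i] at h1
        exact h1
      -- domination of exp(θ max)
      have hdom : ∀ ω, Real.exp (θ * ((((Finset.range n).sup fun i => S n i ω) : ℕ) : ℝ))
          ≤ ∑ i ∈ Finset.range n, Real.exp (θ * ((S n i ω : ℕ) : ℝ)) := by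
        intro ω
        obtain ⟨i0, hi0, hval⟩ := Finset.exists_mem_eq_sup (Finset.range n)
          ⟨0, Finset.mem_range.mpr hn⟩ (fun i => S n i ω)
        rw [hval]
        exact Finset.single_le_sum (f := fun i => Real.exp (θ * ((S n i ω : ℕ) : ℝ)))
          (fun i _ => (Real.exp_pos _).le) hi0
      have hintExpM : Integrable
          (fun ω => Real.exp (θ * ((((Finset.range n).sup fun i => S n i ω) : ℕ) : ℝ)))
          volume := by
        refine Integrable.mono (integrable_finset_sum (Finset.range n) fun i _ => hintExpS i)
          ((Real.measurable_exp.comp ((hmeasMR n).const_mul θ)).aestronglyMeasurable)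
          (ae_of_all _ fun ω => ?_)
        rw [Real.norm_of_nonneg (Real.exp_pos _).le,
          Real.norm_of_nonneg (Finset.sum_nonneg fun i _ => (Real.exp_pos _).le)]
        exact hdom ω
      -- Jensen
      have hjen : Real.exp (θ * E n)
          ≤ ∫ ω, Real.exp (θ * ((((Finset.range n).sup fun i => S n i ω) : ℕ) : ℝ)) := by
        have hconv : ConvexOn ℝ Set.univ Real.exp := convexOn_exp
        have h1 := hconv.map_integral_le (μ := (volume : Measure Ω))
          (f := fun ω => θ * ((((Finset.range n).sup fun i => S n i ω) : ℕ) : ℝ))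
          (Real.continuous_exp.continuousOn) isClosed_univ
          (ae_of_all _ fun ω => Set.mem_univ _) ((hintM n).const_mul θ) hintExpM
        have h2 : ∫ ω, θ * ((((Finset.range n).sup fun i => S n i ω) : ℕ) : ℝ) = θ * E n := by
          rw [integral_const_mul]
        rw [h2] at h1
        exact h1
      -- sum bound on the mgf of the max
      have hsumbd : ∫ ω, Real.exp (θ * ((((Finset.range n).sup fun i => S n i ω) : ℕ) : ℝ))
          ≤ (n : ℝ) * m ^ K n := by
        have h1 : ∫ ω, Real.exp (θ * ((((Finset.range n).sup fun i => S n i ω) : ℕ) : ℝ))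
            ≤ ∫ ω, ∑ i ∈ Finset.range n, Real.exp (θ * ((S n i ω : ℕ) : ℝ)) :=
          integral_mono hintExpM (integrable_finset_sum _ fun i _ => hintExpS i) hdom
        rw [integral_finset_sum _ fun i _ => hintExpS i] at h1
        calc ∫ ω, Real.exp (θ * ((((Finset.range n).sup fun i => S n i ω) : ℕ) : ℝ))
            ≤ ∑ i ∈ Finset.range n, ∫ ω, Real.exp (θ * ((S n i ω : ℕ) : ℝ)) := h1
          _ = (n : ℝ) * m ^ K n := by
              rw [Finset.sum_congr rfl fun i _ => hmgfS i]
              simp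
      have hnpos : (0:ℝ) < n := by exact_mod_cast hn
      have h3 : Real.exp (θ * E n) ≤ (n : ℝ) * m ^ K n := hjen.trans hsumbd
      calc θ * E n = Real.log (Real.exp (θ * E n)) := (Real.log_exp _).symm
        _ ≤ Real.log ((n : ℝ) * m ^ K n) := Real.log_le_log (Real.exp_pos _) h3
        _ = Real.log n + (K n : ℝ) * Real.log m := by
            rw [Real.log_mul (ne_of_gt hnpos) (by positivity), Real.log_pow]
    -- conclude via order topology
    rw [tendsto_order]
    constructor
    · intro b hb
      filter_upwards [hK1, eventually_ge_atTop 1] with n hk hn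
      have hKpos : (0:ℝ) < K n := by exact_mod_cast hk
      have h1 : 1 / γ ≤ E n / K n := by
        rw [le_div_iff₀ hKpos]
        calc 1 / γ * K n = (K n : ℝ) / γ := by ring
          _ ≤ E n := hlow n hn
      linarith
    · intro b hb
      set ε : ℝ := b - 1 / γ with hεdef
      have hε : 0 < ε := by rw [hεdef]; linarith
      -- choose θ
      have hF0 : (1 : ℝ) - (1 - γ) * Real.exp 0 = γ := by simp
      have hcont1 : ContinuousAt (fun θ : ℝ => Real.exp θ / (1 - (1 - γ) * Real.exp θ)) 0 := by
        apply ContinuousAt.div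
        · exact Real.continuous_exp.continuousAt
        · fun_prop
        · rw [hF0]; exact ne_of_gt hγ0
      have hval1 : (fun θ : ℝ => Real.exp θ / (1 - (1 - γ) * Real.exp θ)) 0 = 1 / γ := by
        simp
      have hev1 : ∀ᶠ θ in nhds (0:ℝ),
          Real.exp θ / (1 - (1 - γ) * Real.exp θ) < 1 / γ + ε / 2 := by
        have h2 : Tendsto (fun θ : ℝ => Real.exp θ / (1 - (1 - γ) * Real.exp θ)) (nhds 0)
            (nhds (1 / γ)) := by
          rw [← hval1]
          exact hcont1
        exact h2.eventually_lt_const (by linarith)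
      have hev2 : ∀ᶠ θ in nhds (0:ℝ), (1 - γ) * Real.exp θ < 1 := by
        have h2 : Tendsto (fun θ : ℝ => (1 - γ) * Real.exp θ) (nhds 0) (nhds (1 - γ)) := by
          have h3 : Continuous (fun θ : ℝ => (1 - γ) * Real.exp θ) :=
            continuous_const.mul Real.continuous_exp
          have h4 : Tendsto (fun θ : ℝ => (1 - γ) * Real.exp θ) (nhds 0)
              (nhds ((1 - γ) * Real.exp 0)) := h3.continuousAt
          rwa [Real.exp_zero, mul_one] at h4
        exact h2.eventually_lt_const (by linarith)
      obtain ⟨θ, ⟨hθ1, hθ2⟩, hθ0⟩ :=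
        (((hev1.and hev2).filter_mono nhdsWithin_le_nhds).and
          (eventually_mem_nhdsWithin (s := Set.Ioi (0:ℝ)))).exists
      have hθpos : 0 < θ := hθ0
      have hqpos : 0 < 1 - (1 - γ) * Real.exp θ := by linarith
      set c : ℝ := Real.exp θ / (1 - (1 - γ) * Real.exp θ) with hcdef
      set m : ℝ := γ * Real.exp θ / (1 - (1 - γ) * Real.exp θ) with hmdef
      have hmpos : 0 < m := by rw [hmdef]; positivity
      have hcpos : 0 < c := by rw [hcdef]; positivity
      have hlogm : Real.log m ≤ θ * c := by
        have h1 : Real.log m ≤ m - 1 := Real.log_le_sub_one_of_pos hmpos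
        have h3 : Real.exp θ - 1 ≤ θ * Real.exp θ := by
          have ha : (-θ + 1) * Real.exp θ ≤ Real.exp (-θ) * Real.exp θ :=
            mul_le_mul_of_nonneg_right (Real.add_one_le_exp (-θ)) (Real.exp_pos θ).le
          have hb2 : Real.exp (-θ) * Real.exp θ = 1 := by
            rw [← Real.exp_add]
            simp
          nlinarith [ha, hb2]
        have hm1 : m - 1 = (Real.exp θ - 1) / (1 - (1 - γ) * Real.exp θ) := by
          rw [hmdef, div_sub_one hqpos.ne']
          congr 1
          ring
        have h4 : (Real.exp θ - 1) / (1 - (1 - γ) * Real.exp θ)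
            ≤ (θ * Real.exp θ) / (1 - (1 - γ) * Real.exp θ) := by
          gcongr
        have h5 : (θ * Real.exp θ) / (1 - (1 - γ) * Real.exp θ) = θ * c := by
          rw [hcdef, mul_div_assoc]
        linarith
      -- eventual smallness of log n / (θ K n)
      have hsmall : ∀ᶠ n : ℕ in atTop, Real.log n / (K n : ℝ) < θ * (ε / 2) :=
        hlogn0.eventually_lt_const (by positivity)
      filter_upwards [hK1, eventually_ge_atTop 1, hsmall] with n hk hn hsm
      have hKpos : (0:ℝ) < K n := by exact_mod_cast hk
      have hub := hup θ hθpos hθ2 n hn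
      rw [← hmdef] at hub
      have hlogn : Real.log n < θ * (ε / 2) * K n := by
        rw [div_lt_iff₀ hKpos] at hsm
        linarith
      have hKc : (K n : ℝ) * Real.log m ≤ (K n : ℝ) * (θ * c) :=
        mul_le_mul_of_nonneg_left hlogm (le_of_lt hKpos)
      have hc2 : c < 1 / γ + ε / 2 := by rw [hcdef]; exact hθ1
      have hEn : θ * E n < θ * (ε / 2) * K n + (K n : ℝ) * (θ * c) := by linarith
      rw [div_lt_iff₀ hKpos]
      have hbval : b = 1 / γ + ε := by rw [hεdef]; ring
      -- θ E n < θ K (ε/2 + c) < θ K b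
      have h6 : θ * E n < θ * ((K n : ℝ) * b) := by
        calc θ * E n < θ * (ε / 2) * K n + (K n : ℝ) * (θ * c) := hEn
          _ = θ * ((K n : ℝ) * (ε / 2 + c)) := by ring
          _ ≤ θ * ((K n : ℝ) * (ε / 2 + (1 / γ + ε / 2))) :=
              mul_le_mul_of_nonneg_left
                (mul_le_mul_of_nonneg_left (by linarith) hKpos.le) hθpos.le
          _ = θ * ((K n : ℝ) * b) := by rw [hbval]; ring_nf
      have h7 : E n < (K n : ℝ) * b := by
        have := (mul_lt_mul_iff_right₀ hθpos).mp h6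
        linarith
      linarith
  constructor
  · exact key
  · have h2 := key.inv₀ (by positivity : (1:ℝ) / γ ≠ 0)
    simp only [one_div, inv_inv, inv_div] at h2 ⊢
    exact h2
end

section
/- Suppose K = K(n) satisfies K(n)/log n → 0 as n → ∞ (K ∈ o(log n)), K(n) ≥ 1. For the memoryless erasure channel with success probability γ ∈ (0,1), the throughput vanishes: η(n,K) = K/E[T(n,K)] → 0 as n → ∞, where T(n,K) is the maximum over n i.i.d. negative-binomial(K,γ) completion times. -/
open MeasureTheory ProbabilityTheory Filter

theorem stmt_18 {Ω : Type*} [MeasureSpace Ω] [IsProbabilityMeasure (volume : Measure Ω)]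
    (γ : ℝ) (hγ : γ ∈ Set.Ioo (0:ℝ) 1) (K : ℕ → ℕ) (hK1 : ∀ n, 1 ≤ K n)
    (hK : Tendsto (fun n : ℕ => (K n : ℝ) / Real.log n) atTop (nhds 0))
    (G : ℕ × ℕ → Ω → ℕ)
    (hmeas : ∀ p, Measurable (G p))
    (hindep : iIndepFun G volume)
    (hgeom : ∀ p, ∀ t : ℕ, 1 ≤ t →
      volume {ω | G p ω = t} = ENNReal.ofReal (γ * (1 - γ) ^ (t - 1)))
    (hint : ∀ p, Integrable (fun ω => (G p ω : ℝ)) volume) :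
    Tendsto (fun n : ℕ => (K n : ℝ) /
        ∫ ω, ((((Finset.range n).sup fun i => ∑ j ∈ Finset.range (K n), G (i, j) ω : ℕ)) : ℝ))
      atTop (nhds 0) := by
  obtain ⟨hγ0, hγ1⟩ := hγ
  set r : ℝ := 1 - γ with hrdef
  have hr0 : 0 < r := by simp [hrdef]; linarith
  have hr1 : r < 1 := by simp [hrdef]; linarith
  set c : ℝ := -Real.log r with hcdef
  have hc : 0 < c := by
    have := Real.log_neg hr0 hr1
    simp [hcdef]; linarith
  -- tail probability of a single geometric
  have tail : ∀ p, ∀ t : ℕ, 1 ≤ t →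
      volume {ω | t ≤ G p ω} = ENNReal.ofReal (r ^ (t - 1)) := by
    intro p t ht
    have hset : {ω | t ≤ G p ω} = ⋃ k : ℕ, {ω | G p ω = t + k} := by
      ext ω; simp only [Set.mem_setOf_eq, Set.mem_iUnion]
      constructor
      · intro h; exact ⟨G p ω - t, by omega⟩
      · rintro ⟨k, hk⟩; omega
    rw [hset, measure_iUnion]
    · have heq : ∀ k : ℕ, volume {ω | G p ω = t + k}
          = ENNReal.ofReal ((γ * r ^ (t - 1)) * r ^ k) := by
        intro k
        rw [hgeom p (t + k) (by omega)]
        congr 1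
        have : t + k - 1 = (t - 1) + k := by omega
        rw [this, pow_add]; ring
      simp_rw [heq]
      rw [← ENNReal.ofReal_tsum_of_nonneg
          (fun k => by positivity)
          ((summable_geometric_of_lt_one hr0.le hr1).mul_left _)]
      rw [tsum_mul_left, tsum_geometric_of_lt_one hr0.le hr1]
      congr 1
      have h1r : 1 - r = γ := by simp [hrdef]
      rw [h1r]
      field_simp
    · intro k l hkl
      simp only [Function.onFun]
      rw [Set.disjoint_left]
      intro ω h1 h2
      simp only [Set.mem_setOf_eq] at h1 h2
      exact hkl (by omega)
    · intro k
      exact hmeas p (measurableSet_singleton (t + k))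
  -- probability of being below t
  have below : ∀ p, ∀ t : ℕ, 1 ≤ t →
      volume {ω | G p ω < t} = ENNReal.ofReal (1 - r ^ (t - 1)) := by
    intro p t ht
    have hset : {ω | G p ω < t} = {ω | t ≤ G p ω}ᶜ := by
      ext ω; simp [not_le]
    have hx1 : r ^ (t - 1) ≤ 1 := pow_le_one₀ hr0.le hr1.le
    have hms : MeasurableSet {ω | t ≤ G p ω} := hmeas p measurableSet_Ici
    rw [hset, measure_compl hms (measure_ne_top _ _), tail p t ht]
    rw [measure_univ, ENNReal.ofReal_sub _ (by positivity), ENNReal.ofReal_one]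
  -- independence: probability that all first-slot geometrics are below t
  have prodA : ∀ n t : ℕ, 1 ≤ t →
      volume (⋂ i ∈ Finset.range n, {ω | G (i, 0) ω < t})
        = ENNReal.ofReal ((1 - r ^ (t - 1)) ^ n) := by
    intro n t ht
    have hS := hindep.meas_biInter
      (S := (Finset.range n).image (fun i : ℕ => (i, (0:ℕ))))
      (s := fun p => G p ⁻¹' Set.Iio t)
      (fun p _ => ⟨Set.Iio t, measurableSet_Iio, rfl⟩)
    have hinj : Set.InjOn (fun i : ℕ => (i, (0:ℕ))) (Finset.range n) := by
      intro a _ b _ h; simpa using h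
    rw [Finset.set_biInter_finset_image, Finset.prod_image (fun a ha b hb h => hinj ha hb h)]
      at hS
    have hpre : ∀ i : ℕ, (G (i,0) ⁻¹' Set.Iio t) = {ω | G (i,0) ω < t} := fun i => rfl
    simp only [hpre] at hS
    rw [hS]
    have hconst : ∀ i ∈ Finset.range n,
        volume {ω | G (i,0) ω < t} = ENNReal.ofReal (1 - r ^ (t - 1)) :=
      fun i _ => below (i,0) t ht
    rw [Finset.prod_congr rfl hconst, Finset.prod_const, Finset.card_range,
      ← ENNReal.ofReal_pow (by
        have : r ^ (t-1) ≤ 1 := pow_le_one₀ hr0.le hr1.le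
        linarith)]
  -- measurability and integrability of the max
  have supmeas : ∀ n : ℕ, Measurable fun ω =>
      ((Finset.range n).sup fun i => ∑ j ∈ Finset.range (K n), G (i, j) ω) := by
    intro n
    have : ∀ s : Finset ℕ,
        Measurable fun ω => s.sup fun i => ∑ j ∈ Finset.range (K n), G (i, j) ω := by
      intro s
      induction s using Finset.induction with
      | empty => simpa using measurable_const
      | insert _ _ h ih =>
        simp only [Finset.sup_insert]
        exact Measurable.sup (Finset.measurable_sum _ fun j _ => hmeas _) ih
    exact this _
  have Tmeas : ∀ n : ℕ, Measurable fun ω =>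
      (((Finset.range n).sup fun i => ∑ j ∈ Finset.range (K n), G (i, j) ω : ℕ) : ℝ) :=
    fun n => (measurable_from_top).comp (supmeas n)
  have Tnn : ∀ n : ℕ, ∀ ω,
      (0:ℝ) ≤ (((Finset.range n).sup fun i => ∑ j ∈ Finset.range (K n), G (i, j) ω : ℕ) : ℝ) :=
    fun n ω => Nat.cast_nonneg _
  have Tint : ∀ n : ℕ, Integrable (fun ω =>
      (((Finset.range n).sup fun i => ∑ j ∈ Finset.range (K n), G (i, j) ω : ℕ) : ℝ)) volume := by
    intro n
    refine Integrable.mono'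
      (integrable_finset_sum (Finset.range n ×ˢ Finset.range (K n))
        (fun p _ => hint p)) (Tmeas n).aestronglyMeasurable (ae_of_all _ fun ω => ?_)
    rw [Real.norm_natCast]
    have hnat : ((Finset.range n).sup fun i => ∑ j ∈ Finset.range (K n), G (i, j) ω)
        ≤ ∑ p ∈ Finset.range n ×ˢ Finset.range (K n), G p ω := by
      refine Finset.sup_le fun i hi => ?_
      rw [Finset.sum_product]
      exact Finset.single_le_sum (f := fun i => ∑ j ∈ Finset.range (K n), G (i, j) ω)
        (fun _ _ => Nat.zero_le _) hi
    calc (((Finset.range n).sup fun i => ∑ j ∈ Finset.range (K n), G (i, j) ω : ℕ) : ℝ)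
        ≤ ((∑ p ∈ Finset.range n ×ˢ Finset.range (K n), G p ω : ℕ) : ℝ) := Nat.cast_le.2 hnat
      _ = ∑ p ∈ Finset.range n ×ˢ Finset.range (K n), ((G p ω : ℕ) : ℝ) := by push_cast; rfl
  -- key lower bound on the expectation
  have key : ∀ n t : ℕ, 1 ≤ t →
      (t : ℝ) * (1 - (1 - r ^ (t - 1)) ^ n)
        ≤ ∫ ω, (((Finset.range n).sup fun i => ∑ j ∈ Finset.range (K n), G (i, j) ω : ℕ) : ℝ) := by
    intro n t ht
    set x : ℝ := r ^ (t - 1) with hxdef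
    have hx0 : 0 < x := pow_pos hr0 _
    have hx1 : x ≤ 1 := pow_le_one₀ hr0.le hr1.le
    have markov := mul_meas_ge_le_integral_of_nonneg (μ := volume)
      (ae_of_all _ (Tnn n)) (Tint n) (t : ℝ)
    simp only [Nat.cast_le] at markov
    set A : Set Ω := ⋂ i ∈ Finset.range n, {ω | G (i, 0) ω < t} with hAdef
    have hAmeas : MeasurableSet A :=
      Finset.measurableSet_biInter _ (fun i _ => hmeas (i,0) measurableSet_Iio)
    have hsub : Aᶜ ⊆ {ω | t ≤ (Finset.range n).sup fun i => ∑ j ∈ Finset.range (K n), G (i, j) ω} := by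
      intro ω hω
      simp only [hAdef, Set.compl_iInter, Set.mem_iUnion, Set.mem_compl_iff,
        Set.mem_setOf_eq, not_lt] at hω
      obtain ⟨i, hi, hti⟩ := hω
      have h1 : t ≤ ∑ j ∈ Finset.range (K n), G (i, j) ω :=
        le_trans hti (Finset.single_le_sum (f := fun j => G (i, j) ω)
          (fun _ _ => Nat.zero_le _) (Finset.mem_range.2 (hK1 n)))
      have h2 : t ≤ (Finset.range n).sup fun i => ∑ j ∈ Finset.range (K n), G (i, j) ω :=
        le_trans h1 (Finset.le_sup (f := fun i => ∑ j ∈ Finset.range (K n), G (i, j) ω) hi)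
      exact h2
    have hcompl : volume Aᶜ = 1 - ENNReal.ofReal ((1 - x) ^ n) := by
      rw [measure_compl hAmeas (measure_ne_top _ _), measure_univ, prodA n t ht]
    have hle : 1 - ENNReal.ofReal ((1 - x) ^ n)
        ≤ volume {ω | t ≤ (Finset.range n).sup fun i => ∑ j ∈ Finset.range (K n), G (i, j) ω} := by
      rw [← hcompl]
      exact measure_mono hsub
    have hofle : ENNReal.ofReal ((1 - x) ^ n) ≤ 1 :=
      ENNReal.ofReal_le_one.2 (pow_le_one₀ (by linarith) (by linarith))
    have htoReal : 1 - (1 - x) ^ n ≤ (volume {ω | t ≤ (Finset.range n).sup fun i => ∑ j ∈ Finset.range (K n), G (i, j) ω}).toReal := by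
      have := ENNReal.toReal_mono (measure_ne_top _ _) hle
      rwa [ENNReal.toReal_sub_of_le hofle (by simp), ENNReal.toReal_one,
        ENNReal.toReal_ofReal (pow_nonneg (by linarith) n)] at this
    calc (t : ℝ) * (1 - (1 - x) ^ n)
        ≤ (t : ℝ) * (volume {ω | t ≤ (Finset.range n).sup fun i => ∑ j ∈ Finset.range (K n), G (i, j) ω}).toReal :=
          mul_le_mul_of_nonneg_left htoReal (Nat.cast_nonneg _)
      _ ≤ _ := markov
  -- main lower bound on the expectation for n ≥ 2
  have main : ∀ n : ℕ, 2 ≤ n → Real.log n / (4 * c)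
      ≤ ∫ ω, (((Finset.range n).sup fun i => ∑ j ∈ Finset.range (K n), G (i, j) ω : ℕ) : ℝ) := by
    intro n hn
    have hn1 : (1:ℝ) < n := by exact_mod_cast hn.trans_lt' one_lt_two
    have hlogn : 0 < Real.log n := Real.log_pos hn1
    set L : ℝ := Real.log n / (2 * c) with hLdef
    have hL0 : 0 ≤ L := by positivity
    set t : ℕ := ⌊L⌋₊ + 1 with htdef
    have ht1 : 1 ≤ t := Nat.succ_le_succ (Nat.zero_le _)
    have htm1 : t - 1 = ⌊L⌋₊ := by omega
    have htL : L ≤ (t : ℝ) := by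
      rw [htdef]; push_cast
      exact (Nat.lt_floor_add_one L).le
    set x : ℝ := r ^ (t - 1) with hxdef
    have hx0 : 0 < x := pow_pos hr0 _
    have hx1 : x ≤ 1 := pow_le_one₀ hr0.le hr1.le
    have hxlow : Real.exp (-(Real.log n) / 2) ≤ x := by
      have hm : ((t - 1 : ℕ) : ℝ) ≤ L := by
        rw [htm1]; exact Nat.floor_le hL0
      have hxe : x = Real.exp (((t - 1 : ℕ) : ℝ) * Real.log r) := by
        rw [hxdef, ← Real.log_pow, Real.exp_log (pow_pos hr0 _)]
      rw [hxe]
      apply Real.exp_le_exp.2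
      have hlr : Real.log r = -c := by rw [hcdef]; ring
      rw [hlr]
      have h1 : ((t - 1 : ℕ) : ℝ) * c ≤ L * c := mul_le_mul_of_nonneg_right hm hc.le
      have h2 : L * c = Real.log n / 2 := by
        have hc0 : c ≠ 0 := hc.ne'
        rw [hLdef]; field_simp
      nlinarith
    have hnx : (1:ℝ) ≤ n * x := by
      have hexp : Real.exp (Real.log n) = n := Real.exp_log (by linarith)
      calc (1:ℝ) = Real.exp 0 := Real.exp_zero.symm
        _ ≤ Real.exp (Real.log n / 2) := Real.exp_le_exp.2 (by linarith)
        _ = Real.exp (Real.log n) * Real.exp (-(Real.log n) / 2) := by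
            rw [← Real.exp_add]; ring_nf
        _ = n * Real.exp (-(Real.log n) / 2) := by rw [hexp]
        _ ≤ n * x := mul_le_mul_of_nonneg_left hxlow (Nat.cast_nonneg n)
    have hhalf : (1 - x) ^ n ≤ 1 / 2 := by
      have h1 : (1 - x) ^ n ≤ Real.exp (-x) ^ n := by
        apply pow_le_pow_left₀ (by linarith)
        have := Real.add_one_le_exp (-x); linarith
      have h2 : Real.exp (-x) ^ n = Real.exp ((n : ℝ) * (-x)) := (Real.exp_nat_mul _ n).symm
      have h3 : Real.exp ((n : ℝ) * (-x)) ≤ Real.exp (-1) := by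
        apply Real.exp_le_exp.2; nlinarith
      have h4 : Real.exp (-1) ≤ 1 / 2 := by
        rw [Real.exp_neg]
        have h5 : (2:ℝ) ≤ Real.exp 1 := by have := Real.add_one_le_exp 1; linarith
        rw [one_div]
        exact inv_anti₀ two_pos h5
      calc (1 - x) ^ n ≤ Real.exp (-x) ^ n := h1
        _ = Real.exp ((n : ℝ) * (-x)) := h2
        _ ≤ Real.exp (-1) := h3
        _ ≤ 1 / 2 := h4
    have hk := key n t ht1
    have hfin : Real.log n / (4 * c) ≤ (t : ℝ) * (1 - (1 - x) ^ n) := by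
      have h6 : Real.log n / (4 * c) = L * (1 / 2) := by
        rw [hLdef, div_mul_div_comm, mul_one]
        congr 1
        ring
      rw [h6]
      exact mul_le_mul htL (by linarith) (by norm_num) (Nat.cast_nonneg t)
    exact hfin.trans hk
  -- squeeze
  have hg : Tendsto (fun n : ℕ => (4 * c) * ((K n : ℝ) / Real.log n)) atTop (nhds 0) := by
    have := hK.const_mul (4 * c)
    simpa using this
  apply squeeze_zero' (f := fun n : ℕ => (K n : ℝ) /
      ∫ ω, (((Finset.range n).sup fun i => ∑ j ∈ Finset.range (K n), G (i, j) ω : ℕ) : ℝ))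
    ?_ ?_ hg
  · filter_upwards [eventually_ge_atTop 2] with n hn
    exact div_nonneg (Nat.cast_nonneg _) (integral_nonneg (Tnn n))
  · filter_upwards [eventually_ge_atTop 2] with n hn
    have hn1 : (1:ℝ) < n := by exact_mod_cast hn.trans_lt' one_lt_two
    have hlogn : 0 < Real.log n := Real.log_pos hn1
    have hpos : 0 < Real.log n / (4 * c) := by positivity
    have hI := main n hn
    calc (K n : ℝ) /
        ∫ ω, (((Finset.range n).sup fun i => ∑ j ∈ Finset.range (K n), G (i, j) ω : ℕ) : ℝ)
        ≤ (K n : ℝ) / (Real.log n / (4 * c)) :=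
          div_le_div_of_nonneg_left (Nat.cast_nonneg _) hpos hI
      _ = (4 * c) * ((K n : ℝ) / Real.log n) := by
          rw [div_div_eq_mul_div]; ring
end
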